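/- Let (T_m)_m be a sequence of meshes of [0,1] with mesh sizes h_m → 0, and for each m let w_{h_m} ∈ H_{T_m} be a piecewise constant function. If there exists C > 0 such that ‖w_{h_m}‖_{1,T_m} ≤ C for all m, then there exist w ∈ L²(0,1) and a subsequence of (w_{h_m})_m converging to w strongly in L²(0,1). -/

import Mathlib

open MeasureTheory Real Filter Topology

noncomputable section

namespace Corrosion

/-- The Bernoulli function `B(x) = x / (e^x - 1)`, `B(0) = 1`. -/
def Bern (x : ℝ) : ℝ := if x = 0 then 1 else x / (Real.exp x - 1)

/-- The two species: cations `P` and electrons `N`. -/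
inductive Sp | P | N

/-- charge numbers: `z_P = 3`, `z_N = -1`. -/
def z : Sp → ℝ
  | Sp.P => 3
  | Sp.N => -1

/-- A mesh of `[0,1]`: edge points `xe 0 = x_{1/2} = 0 < xe 1 = x_{3/2} < … < xe I = x_{I+1/2} = 1`. -/
structure Mesh where
  I : ℕ
  hI : 1 ≤ I
  xe : ℕ → ℝ
  xe0 : xe 0 = 0
  xeI : xe I = 1
  mono : ∀ j, j < I → xe j < xe (j + 1)

namespace Mesh

variable (m : Mesh)

/-- cell centers `x_i` for `1 ≤ i ≤ I` , with `x_0 = 0` and `x_{I+1} = 1`. -/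
def xc (i : ℕ) : ℝ :=
  if i = 0 then 0 else if i = m.I + 1 then 1 else (m.xe (i - 1) + m.xe i) / 2

/-- `h_i = x_{i+1/2} - x_{i-1/2}` for `1 ≤ i ≤ I`. -/
def h (i : ℕ) : ℝ := m.xe i - m.xe (i - 1)

/-- `h_{i+1/2} = x_{i+1} - x_i` for `0 ≤ i ≤ I`. -/
def hp (i : ℕ) : ℝ := m.xc (i + 1) - m.xc i

/-- mesh size `h = max_{1 ≤ i ≤ I} h_i`. -/
def size : ℝ := (Finset.Icc 1 m.I).sup' ⟨1, Finset.mem_Icc.mpr ⟨le_refl 1, m.hI⟩⟩ m.h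

/-- piecewise constant function associated to a vector `(w_i)_{0 ≤ i ≤ I+1}`:
equal to `w i` on `(x_{i-1/2}, x_{i+1/2})`, to `w 0` at `x = 0`, to `w (I+1)` at `x = 1`. -/
def pw (w : ℕ → ℝ) (x : ℝ) : ℝ :=
  if x = 0 then w 0 else if x = 1 then w (m.I + 1) else w (sInf {i : ℕ | x < m.xe i})

/-- square of the discrete `H¹` norm `‖w_h‖_{1,T}`. -/
def norm1sq (w : ℕ → ℝ) : ℝ :=
  (∑ i ∈ Finset.range (m.I + 1), (w (i + 1) - w i) ^ 2 / m.hp i) + w 0 ^ 2 + w (m.I + 1) ^ 2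

/-- square of the discrete `L²` norm `‖w_h‖_0`. -/
def norm0sq (w : ℕ → ℝ) : ℝ := ∑ i ∈ Finset.Icc 1 m.I, m.h i * w i ^ 2

/-- the discrete dual norm `‖w_h‖_{-1,2,T}`. -/
def normDual (w : ℕ → ℝ) : ℝ :=
  sSup {r : ℝ | ∃ v : ℕ → ℝ, m.norm1sq v ≤ 1 ∧
    r = ∫ x in Set.Ioo (0:ℝ) 1, m.pw w x * m.pw v x}

/-- piecewise constant space derivative: on `(x_i, x_{i+1})` it equals `(w_{i+1} - w_i)/h_{i+1/2}`. -/
def dpw (w : ℕ → ℝ) (x : ℝ) : ℝ :=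
  (w (sInf {i : ℕ | x < m.xc (i + 1)} + 1) - w (sInf {i : ℕ | x < m.xc (i + 1)})) /
    m.hp (sInf {i : ℕ | x < m.xc (i + 1)})

end Mesh

/-- All the data of the corrosion model. -/
structure Data where
  lam : ℝ
  eps : ℝ
  alpha0 : ℝ
  alpha1 : ℝ
  V : ℝ
  rho : ℝ
  dPsi0 : ℝ
  dPsi1 : ℝ
  umax : Sp → ℝ
  m0 : Sp → ℝ
  k0 : Sp → ℝ
  m1 : Sp → ℝ
  k1 : Sp → ℝ
  a0 : Sp → ℝ
  b0 : Sp → ℝ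
  a1 : Sp → ℝ
  b1 : Sp → ℝ
  u0 : Sp → ℝ → ℝ
  lam_pos : 0 < lam
  umax_pos : ∀ u, 0 < umax u
  m0_pos : ∀ u, 0 < m0 u
  k0_pos : ∀ u, 0 < k0 u
  m1_pos : ∀ u, 0 < m1 u
  k1_pos : ∀ u, 0 < k1 u
  a0_mem : ∀ u, a0 u ∈ Set.Icc (0:ℝ) 1
  b0_mem : ∀ u, b0 u ∈ Set.Icc (0:ℝ) 1
  a1_mem : ∀ u, a1 u ∈ Set.Icc (0:ℝ) 1
  b1_mem : ∀ u, b1 u ∈ Set.Icc (0:ℝ) 1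
  u0_meas : ∀ u, Measurable (u0 u)

namespace Data
variable (d : Data)

/-- `ε_P = 1`, `ε_N = ε`. -/
def epsu : Sp → ℝ
  | Sp.P => 1
  | Sp.N => d.eps

def beta0 (u : Sp) (x : ℝ) : ℝ :=
  d.m0 u * Real.exp (-(z u) * d.b0 u * x) + d.k0 u * Real.exp (z u * d.a0 u * x)

def beta1 (u : Sp) (x : ℝ) : ℝ :=
  d.m1 u * Real.exp (-(z u) * d.b1 u * x) + d.k1 u * Real.exp (z u * d.a1 u * x)

def gamma0 (u : Sp) (x : ℝ) : ℝ := d.m0 u * d.umax u * Real.exp (-(z u) * d.b0 u * x)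

def gamma1 (u : Sp) (x : ℝ) : ℝ := d.k1 u * d.umax u * Real.exp (z u * d.a1 u * x)

/-- Hypotheses (H). -/
def HypH : Prop :=
  (3 * d.umax Sp.P - d.umax Sp.N + d.rho = 0) ∧
  (∀ u, ∀ᵐ x ∂(volume.restrict (Set.Ioo (0:ℝ) 1)), 0 ≤ d.u0 u x ∧ d.u0 u x ≤ d.umax u) ∧
  (-(1 / (3 * d.a0 Sp.P)) * (1 + Real.log (d.alpha0 * d.a0 Sp.P * d.k0 Sp.P)) ≤ d.dPsi0 ∧
    d.dPsi0 ≤ (1 / d.a0 Sp.N) * (1 + Real.log (d.alpha0 * d.a0 Sp.N * d.k0 Sp.N))) ∧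
  (-(1 / d.b1 Sp.N) * (1 + Real.log (d.alpha1 * d.b1 Sp.N * d.m1 Sp.N)) ≤ d.dPsi1 ∧
    d.dPsi1 ≤ (1 / (3 * d.b1 Sp.P)) * (1 + Real.log (d.alpha1 * d.b1 Sp.P * d.m1 Sp.P)))

end Data

/-- `dΨ_{i+1/2} = (Ψ_{i+1} - Ψ_i)/h_{i+1/2}`. -/
def dPsiF (m : Mesh) (Psi : ℕ → ℝ) (i : ℕ) : ℝ := (Psi (i + 1) - Psi i) / m.hp i

/-- the Scharfetter-Gummel numerical flux `F_{u,i+1/2}`. -/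
def Flux (m : Mesh) (d : Data) (u : Sp) (Psi w : ℕ → ℝ) (i : ℕ) : ℝ :=
  (Bern (z u * m.hp i * dPsiF m Psi i) * w i -
    Bern (-(z u) * m.hp i * dPsiF m Psi i) * w (i + 1)) / m.hp i

/-- The fully implicit scheme (S), with time step `Δt = T / K`.
`sol u k i` is `u_i^k` (for `u = P, N`) and `Psi k i` is `Ψ_i^k`. -/
def Scheme (m : Mesh) (d : Data) (T : ℝ) (K : ℕ)
    (sol : Sp → ℕ → ℕ → ℝ) (Psi : ℕ → ℕ → ℝ) : Prop :=
  (∀ u i, 1 ≤ i → i ≤ m.I →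
    sol u 0 i = (1 / m.h i) * ∫ x in Set.Ioo (m.xe (i - 1)) (m.xe i), d.u0 u x) ∧
  (∀ k, k < K → ∀ i, 1 ≤ i → i ≤ m.I →
    -(d.lam ^ 2) * (dPsiF m (Psi (k + 1)) i - dPsiF m (Psi (k + 1)) (i - 1)) =
      m.h i * (3 * sol Sp.P (k + 1) i - sol Sp.N (k + 1) i + d.rho)) ∧
  (∀ u k, k < K → ∀ i, 1 ≤ i → i ≤ m.I →
    d.epsu u * m.h i * (sol u (k + 1) i - sol u k i) / (T / K) +
      Flux m d u (Psi (k + 1)) (sol u (k + 1)) i -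
      Flux m d u (Psi (k + 1)) (sol u (k + 1)) (i - 1) = 0) ∧
  (∀ k, k < K → Psi (k + 1) 0 - d.alpha0 * dPsiF m (Psi (k + 1)) 0 = d.dPsi0) ∧
  (∀ k, k < K →
    Psi (k + 1) (m.I + 1) + d.alpha1 * dPsiF m (Psi (k + 1)) m.I = d.V - d.dPsi1) ∧
  (∀ u k, k < K →
    -(Flux m d u (Psi (k + 1)) (sol u (k + 1)) 0) =
      d.beta0 u (Psi (k + 1) 0) * sol u (k + 1) 0 - d.gamma0 u (Psi (k + 1) 0)) ∧
  (∀ u k, k < K →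
    Flux m d u (Psi (k + 1)) (sol u (k + 1)) m.I =
      d.beta1 u (d.V - Psi (k + 1) (m.I + 1)) * sol u (k + 1) (m.I + 1) -
      d.gamma1 u (d.V - Psi (k + 1) (m.I + 1)))

/-- The stability property `0 ≤ u_i^k ≤ u^max` for all `i, k`. -/
def Stable (m : Mesh) (d : Data) (K : ℕ) (sol : Sp → ℕ → ℕ → ℝ) : Prop :=
  ∀ u k, k ≤ K → ∀ i, i ≤ m.I + 1 → 0 ≤ sol u k i ∧ sol u k i ≤ d.umax u

/-- the approximate space-time solution `w_{h,Δt}`, equal to the piecewise constant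
function built on `w^{k+1}` for `t ∈ [t^k, t^{k+1})`, with `Δt = T/K`. -/
def apx (m : Mesh) (T : ℝ) (K : ℕ) (w : ℕ → ℕ → ℝ) (x t : ℝ) : ℝ :=
  m.pw (w (Nat.floor (t / (T / K)) + 1)) x

/-- the discrete space derivative `∂_{x,T} w_{h,Δt}`. -/
def dapx (m : Mesh) (T : ℝ) (K : ℕ) (w : ℕ → ℕ → ℝ) (x t : ℝ) : ℝ :=
  m.dpw (w (Nat.floor (t / (T / K)) + 1)) x


/-- hyperbolic cotangent `coth y = cosh y / sinh y`. -/
def coth (x : ℝ) : ℝ := Real.cosh x / Real.sinh x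

/-- approximate trace at `x = 0`: `t ∈ [t^k, t^{k+1}) ↦ w_0^{k+1}`. -/
def trace0 (T : ℝ) (K : ℕ) (w : ℕ → ℕ → ℝ) (t : ℝ) : ℝ :=
  w (Nat.floor (t / (T / K)) + 1) 0

/-- approximate trace at `x = 1`: `t ∈ [t^k, t^{k+1}) ↦ w_{I+1}^{k+1}`. -/
def trace1 (m : Mesh) (T : ℝ) (K : ℕ) (w : ℕ → ℕ → ℝ) (t : ℝ) : ℝ :=
  w (Nat.floor (t / (T / K)) + 1) (m.I + 1)

/-- the measure on `(0,1) × (0,T)` (space × time). -/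
def stMeasure (T : ℝ) : MeasureTheory.Measure (ℝ × ℝ) :=
  (MeasureTheory.volume.restrict (Set.Ioo (0:ℝ) 1)).prod
    (MeasureTheory.volume.restrict (Set.Ioo (0:ℝ) T))

end Corrosion


lemma helly_selection (M : ℝ) (f : ℕ → ℝ → ℝ) (hmono : ∀ n, Monotone (f n))
    (hbd : ∀ n x, f n x ∈ Set.Icc (-M) M) :
    ∃ (g : ℝ → ℝ) (φ : ℕ → ℕ), Monotone g ∧ (∀ x, g x ∈ Set.Icc (-M) M) ∧ StrictMono φ ∧
      ∀ x, ContinuousAt g x → Tendsto (fun n => f (φ n) x) atTop (𝓝 (g x)) := by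
  let u : ℕ → (ℚ → Set.Icc (-M) M) := fun n q => ⟨f n q, hbd n q⟩
  obtain ⟨G, -, φ, hφ, hconv⟩ :=
    (isCompact_univ (X := ℚ → Set.Icc (-M) M)).tendsto_subseq (fun n => Set.mem_univ (u n))
  have hGq : ∀ q : ℚ, Tendsto (fun n => f (φ n) q) atTop (𝓝 (G q : ℝ)) := by
    intro q
    exact ((continuous_subtype_val.comp (continuous_apply q)).tendsto G).comp hconv
  have hGmono : ∀ q r : ℚ, q ≤ r → (G q : ℝ) ≤ (G r : ℝ) := fun q r h =>
    le_of_tendsto_of_tendsto' (hGq q) (hGq r) (fun n => hmono _ (by exact_mod_cast h))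
  set S : ℝ → Set ℝ := fun x => (fun q : ℚ => (G q : ℝ)) '' {q : ℚ | (q : ℝ) < x} with hS
  have hSne : ∀ x, (S x).Nonempty := by
    intro x
    obtain ⟨q, hq⟩ := exists_rat_lt x
    exact ⟨G q, ⟨q, hq, rfl⟩⟩
  have hSbdd : ∀ x, BddAbove (S x) := by
    intro x
    refine ⟨M, ?_⟩
    rintro y ⟨q, -, rfl⟩
    exact (G q).2.2
  set g : ℝ → ℝ := fun x => sSup (S x) with hg
  have hGle : ∀ (q : ℚ) (x : ℝ), (q : ℝ) < x → (G q : ℝ) ≤ g x := fun q x h =>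
    le_csSup (hSbdd x) ⟨q, h, rfl⟩
  have hgleG : ∀ (x : ℝ) (r : ℚ), x ≤ (r : ℝ) → g x ≤ (G r : ℝ) := by
    intro x r h
    refine csSup_le (hSne x) ?_
    rintro y ⟨q, hq, rfl⟩
    exact hGmono q r (by exact_mod_cast (le_of_lt (lt_of_lt_of_le hq h)))
  have hgmono : Monotone g := by
    intro x y hxy
    exact csSup_le_csSup (hSbdd y) (hSne x) (Set.image_mono (fun q hq => lt_of_lt_of_le hq hxy))
  refine ⟨g, φ, hgmono, ?_, hφ, ?_⟩
  · intro x
    constructor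
    · obtain ⟨y, hy⟩ := hSne x
      obtain ⟨q, hq, rfl⟩ := hy
      exact le_trans (G q).2.1 (hGle q x hq)
    · refine csSup_le (hSne x) ?_
      rintro y ⟨q, -, rfl⟩
      exact (G q).2.2
  · intro x hcont
    rw [tendsto_order]
    constructor
    · intro a ha
      obtain ⟨y, ⟨q, hq, rfl⟩, hay⟩ := exists_lt_of_lt_csSup (hSne x) ha
      filter_upwards [(hGq q).eventually_const_lt hay] with n hn
      exact lt_of_lt_of_le hn (hmono _ hq.le)
    · intro b hb
      have h1 : ∀ᶠ y in 𝓝 x, g y < b := (hcont : Tendsto g (𝓝 x) (𝓝 (g x))).eventually_lt_const hb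
      obtain ⟨ε, hε, hball⟩ := Metric.eventually_nhds_iff.mp h1
      have hxy : x < x + ε / 2 := by linarith
      obtain ⟨r, hr1, hr2⟩ := exists_rat_btwn hxy
      have hGrb : (G r : ℝ) < b := by
        refine lt_of_le_of_lt (hGle r (x + ε / 2) hr2) (hball ?_)
        rw [Real.dist_eq]
        rw [show x + ε / 2 - x = ε / 2 by ring, abs_of_pos (by linarith : (0:ℝ) < ε / 2)]
        linarith
      filter_upwards [(hGq r).eventually_lt_const hGrb] with n hn
      exact lt_of_le_of_lt (hmono _ hr1.le) hn

open MeasureTheory Real Filter Topology Corrosion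

namespace Corrosion
namespace Mesh
variable (m : Mesh)

lemma xc_zero : m.xc 0 = 0 := if_pos rfl

lemma xc_last : m.xc (m.I + 1) = 1 := by
  unfold xc
  rw [if_neg (by omega : m.I + 1 ≠ 0), if_pos rfl]

lemma xc_mid {i : ℕ} (h1 : 1 ≤ i) (h2 : i ≤ m.I) :
    m.xc i = (m.xe (i - 1) + m.xe i) / 2 := by
  unfold xc
  rw [if_neg (by omega : i ≠ 0), if_neg (by omega : i ≠ m.I + 1)]

lemma xc_lt {i : ℕ} (h : i ≤ m.I) : m.xc i < m.xc (i + 1) := by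
  have hI := m.hI
  rcases Nat.eq_zero_or_pos i with h0 | h0
  · subst h0
    rw [m.xc_zero, m.xc_mid (by omega) (by omega)]
    have := m.mono 0 (by omega)
    rw [m.xe0] at this
    simp only [Nat.sub_self, m.xe0]
    linarith
  · have he1 : m.xe (i - 1) < m.xe i := by
      have := m.mono (i - 1) (by omega)
      rwa [show i - 1 + 1 = i by omega] at this
    rw [m.xc_mid (by omega) h]
    by_cases h2 : i = m.I
    · subst h2
      rw [m.xc_last, m.xeI] at *
      linarith
    · rw [m.xc_mid (by omega) (by omega : i + 1 ≤ m.I)]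
      have he2 : m.xe i < m.xe (i + 1) := m.mono i (by omega)
      rw [show i + 1 - 1 = i by omega]
      linarith

lemma hp_pos {i : ℕ} (h : i ≤ m.I) : 0 < m.hp i := by
  have := m.xc_lt h
  unfold hp
  linarith

lemma sum_hp : ∑ i ∈ Finset.range (m.I + 1), m.hp i = 1 := by
  unfold hp
  rw [Finset.sum_range_sub m.xc, m.xc_last, m.xc_zero]
  norm_num

lemma pw_sub (a b : ℕ → ℝ) (x : ℝ) :
    m.pw (fun i => a i - b i) x = m.pw a x - m.pw b x := by
  unfold pw
  split_ifs <;> rfl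

lemma sInf_le_I {x : ℝ} (hx : x < 1) : sInf {i : ℕ | x < m.xe i} ≤ m.I :=
  Nat.sInf_le (by simp [m.xeI, hx])

lemma pw_eq_of_mem {wv : ℕ → ℝ} {x : ℝ} (hx : x ∈ Set.Ioo (0:ℝ) 1) :
    m.pw wv x = wv (sInf {i : ℕ | x < m.xe i}) := by
  unfold pw
  rw [if_neg (ne_of_gt hx.1), if_neg (ne_of_lt hx.2)]

lemma pw_mono {p : ℕ → ℝ} (hp : Monotone p) : MonotoneOn (m.pw p) (Set.Icc 0 1) := by
  intro x hx y hy hxy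
  by_cases hx0 : x = 0
  · subst hx0
    have h0 : m.pw p 0 = p 0 := if_pos rfl
    rw [h0]
    by_cases hy0 : y = 0
    · subst hy0; rw [h0]
    · by_cases hy1 : y = 1
      · subst hy1
        unfold pw
        rw [if_neg one_ne_zero, if_pos rfl]
        exact hp (Nat.zero_le _)
      · rw [m.pw_eq_of_mem ⟨lt_of_le_of_ne hy.1 (Ne.symm hy0), lt_of_le_of_ne hy.2 hy1⟩]
        exact hp (Nat.zero_le _)
  · have hx0' : 0 < x := lt_of_le_of_ne hx.1 (Ne.symm hx0)
    by_cases hy1 : y = 1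
    · subst hy1
      have h1 : m.pw p 1 = p (m.I + 1) := by
        unfold pw
        rw [if_neg one_ne_zero, if_pos rfl]
      rw [h1]
      by_cases hx1 : x = 1
      · subst hx1; rw [h1]
      · rw [m.pw_eq_of_mem ⟨hx0', lt_of_le_of_ne hx.2 hx1⟩]
        exact hp (le_trans (m.sInf_le_I (lt_of_le_of_ne hx.2 hx1)) (Nat.le_succ _))
    · have hy1' : y < 1 := lt_of_le_of_ne hy.2 hy1
      have hx1' : x < 1 := lt_of_le_of_lt hxy hy1'
      rw [m.pw_eq_of_mem ⟨hx0', hx1'⟩, m.pw_eq_of_mem ⟨lt_of_lt_of_le hx0' hxy, hy1'⟩]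
      refine hp (csInf_le_csInf (OrderBot.bddBelow _) ?_ ?_)
      · exact ⟨m.I, by simp [m.xeI, hy1']⟩
      · intro i hi
        exact lt_of_le_of_lt hxy hi

end Mesh
end Corrosion

open MeasureTheory Real Filter Topology Corrosion

lemma var_bound (m : Mesh) (v : ℕ → ℝ) (C : ℝ) (hC : 0 < C)
    (hb : Real.sqrt (m.norm1sq v) ≤ C) :
    |v 0| ≤ C ∧ ∑ j ∈ Finset.range (m.I + 1), |v (j + 1) - v j| ≤ C := by
  set S := ∑ j ∈ Finset.range (m.I + 1), (v (j + 1) - v j) ^ 2 / m.hp j with hSdef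
  have hS0 : 0 ≤ S := by
    refine Finset.sum_nonneg fun j hj => ?_
    have hj' : j ≤ m.I := by simpa [Nat.lt_succ_iff] using Finset.mem_range.mp hj
    exact div_nonneg (sq_nonneg _) (m.hp_pos hj').le
  have hnorm_eq : m.norm1sq v = S + v 0 ^ 2 + v (m.I + 1) ^ 2 := rfl
  have h0 : 0 ≤ m.norm1sq v := by
    rw [hnorm_eq]; positivity
  have hC2 : m.norm1sq v ≤ C ^ 2 := by
    calc m.norm1sq v = Real.sqrt (m.norm1sq v) ^ 2 := (Real.sq_sqrt h0).symm
    _ ≤ C ^ 2 := pow_le_pow_left₀ (Real.sqrt_nonneg _) hb 2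
  have hS : S ≤ C ^ 2 := by nlinarith [sq_nonneg (v 0), sq_nonneg (v (m.I + 1))]
  constructor
  · have h1 : v 0 ^ 2 ≤ C ^ 2 := by nlinarith [sq_nonneg (v (m.I + 1))]
    calc |v 0| = Real.sqrt (v 0 ^ 2) := (Real.sqrt_sq_eq_abs _).symm
    _ ≤ Real.sqrt (C ^ 2) := Real.sqrt_le_sqrt h1
    _ = C := Real.sqrt_sq hC.le
  · have cs := Finset.sum_mul_sq_le_sq_mul_sq (Finset.range (m.I + 1))
      (fun j => |v (j + 1) - v j| / Real.sqrt (m.hp j)) (fun j => Real.sqrt (m.hp j))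
    have e1 : ∑ j ∈ Finset.range (m.I + 1),
        (|v (j + 1) - v j| / Real.sqrt (m.hp j)) * Real.sqrt (m.hp j)
        = ∑ j ∈ Finset.range (m.I + 1), |v (j + 1) - v j| := by
      refine Finset.sum_congr rfl fun j hj => ?_
      have hj' : j ≤ m.I := by simpa [Nat.lt_succ_iff] using Finset.mem_range.mp hj
      have : Real.sqrt (m.hp j) ≠ 0 := (Real.sqrt_pos.mpr (m.hp_pos hj')).ne'
      field_simp
    have e2 : ∑ j ∈ Finset.range (m.I + 1),
        (|v (j + 1) - v j| / Real.sqrt (m.hp j)) ^ 2 = S := by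
      refine Finset.sum_congr rfl fun j hj => ?_
      have hj' : j ≤ m.I := by simpa [Nat.lt_succ_iff] using Finset.mem_range.mp hj
      rw [div_pow, sq_abs, Real.sq_sqrt (m.hp_pos hj').le]
    have e3 : ∑ j ∈ Finset.range (m.I + 1), Real.sqrt (m.hp j) ^ 2 = 1 := by
      rw [Finset.sum_congr rfl fun j hj => Real.sq_sqrt
        (m.hp_pos (by simpa [Nat.lt_succ_iff] using Finset.mem_range.mp hj)).le, m.sum_hp]
    rw [e1, e2, e3, mul_one] at cs
    have hsum0 : 0 ≤ ∑ j ∈ Finset.range (m.I + 1), |v (j + 1) - v j| :=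
      Finset.sum_nonneg fun j _ => abs_nonneg _
    calc ∑ j ∈ Finset.range (m.I + 1), |v (j + 1) - v j|
        = Real.sqrt ((∑ j ∈ Finset.range (m.I + 1), |v (j + 1) - v j|) ^ 2) :=
          (Real.sqrt_sq hsum0).symm
    _ ≤ Real.sqrt (C ^ 2) := Real.sqrt_le_sqrt (le_trans cs hS)
    _ = C := Real.sqrt_sq hC.le

open Corrosion in
/-- discrete `H¹`-bounded sequences are relatively compact in `L²(0,1)`. -/
theorem discrete_H1_compactness
    (msh : ℕ → Mesh) (hsz : Filter.Tendsto (fun n => (msh n).size) Filter.atTop (nhds 0))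
    (w : ℕ → ℕ → ℝ) (C : ℝ) (hC : 0 < C)
    (hb : ∀ n, Real.sqrt ((msh n).norm1sq (w n)) ≤ C) :
    ∃ (wlim : ℝ → ℝ) (φ : ℕ → ℕ), StrictMono φ ∧
      MemLp wlim 2 (volume.restrict (Set.Ioo (0:ℝ) 1)) ∧
      Filter.Tendsto
        (fun n => ∫ x in Set.Ioo (0:ℝ) 1, ((msh (φ n)).pw (w (φ n)) x - wlim x) ^ 2)
        Filter.atTop (nhds 0) := by
  clear hsz
  set M := 2 * C with hM
  have hM0 : 0 < M := by linarith
  -- monotone decomposition of each discrete vector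
  set d : ℕ → ℕ → ℝ := fun n j => w n (j + 1) - w n j with hd
  set p : ℕ → ℕ → ℝ := fun n i => max (w n 0) 0 + ∑ j ∈ Finset.range i, max (d n j) 0 with hp
  set q : ℕ → ℕ → ℝ := fun n i => max (-(w n 0)) 0 + ∑ j ∈ Finset.range i, max (-(d n j)) 0
    with hq
  have hmaxsub : ∀ a : ℝ, max a 0 - max (-a) 0 = a := by
    intro a
    rcases le_total a 0 with h | h
    · rw [max_eq_right h, max_eq_left (neg_nonneg.mpr h)]; ring
    · rw [max_eq_left h, max_eq_right (neg_nonpos.mpr h)]; ring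
  have hpq : ∀ n i, p n i - q n i = w n i := by
    intro n i
    have : p n i - q n i = (max (w n 0) 0 - max (-(w n 0)) 0) +
        ∑ j ∈ Finset.range i, (max (d n j) 0 - max (-(d n j)) 0) := by
      rw [Finset.sum_sub_distrib]; ring
    rw [this, hmaxsub]
    have : ∑ j ∈ Finset.range i, (max (d n j) 0 - max (-(d n j)) 0)
        = ∑ j ∈ Finset.range i, d n j := Finset.sum_congr rfl fun j _ => by rw [hmaxsub]
    rw [this, hd]
    simp only [Finset.sum_range_sub (w n)]
    ring
  have hpmono : ∀ n, Monotone (p n) :=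
    fun n => monotone_nat_of_le_succ fun i => by
      simp only [hp, Finset.sum_range_succ]
      have := le_max_right (d n i) 0
      linarith [le_max_left (d n i) 0, le_max_right (d n i) 0]
  have hqmono : ∀ n, Monotone (q n) :=
    fun n => monotone_nat_of_le_succ fun i => by
      simp only [hq, Finset.sum_range_succ]
      linarith [le_max_right (-(d n i)) 0]
  have hp0 : ∀ n i, 0 ≤ p n i := fun n i =>
    add_nonneg (le_max_right _ _) (Finset.sum_nonneg fun j _ => le_max_right _ _)
  have hq0 : ∀ n i, 0 ≤ q n i := fun n i =>
    add_nonneg (le_max_right _ _) (Finset.sum_nonneg fun j _ => le_max_right _ _)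
  -- upper bounds from the H¹ bound
  have hvar := fun n => var_bound (msh n) (w n) C hC (hb n)
  have habs_max : ∀ a : ℝ, max a 0 ≤ |a| := fun a =>
    max_le (le_abs_self a) (abs_nonneg a)
  have hptop : ∀ n, p n ((msh n).I + 1) ≤ M := by
    intro n
    have h1 : max (w n 0) 0 ≤ C := le_trans (habs_max _) (hvar n).1
    have h2 : ∑ j ∈ Finset.range ((msh n).I + 1), max (d n j) 0 ≤ C := by
      refine le_trans (Finset.sum_le_sum fun j _ => habs_max (d n j)) (hvar n).2
    simp only [hp]; linarith
  have hqtop : ∀ n, q n ((msh n).I + 1) ≤ M := by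
    intro n
    have h1 : max (-(w n 0)) 0 ≤ C := le_trans (habs_max _) (by rw [abs_neg]; exact (hvar n).1)
    have h2 : ∑ j ∈ Finset.range ((msh n).I + 1), max (-(d n j)) 0 ≤ C := by
      refine le_trans (Finset.sum_le_sum fun j _ => habs_max _) ?_
      refine le_trans (Finset.sum_le_sum fun j _ => le_of_eq (abs_neg (d n j))) (hvar n).2
    simp only [hq]; linarith
  -- clamped monotone real functions
  set clamp : ℝ → ℝ := fun x => min (max x 0) 1 with hclamp
  have hclampmono : Monotone clamp := fun a b hab =>
    min_le_min (max_le_max hab (le_refl 0)) (le_refl 1)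
  have hclampmem : ∀ x, clamp x ∈ Set.Icc (0:ℝ) 1 :=
    fun x => ⟨le_min (le_max_right x 0) zero_le_one, min_le_right _ _⟩
  have hclampid : ∀ x ∈ Set.Ioo (0:ℝ) 1, clamp x = x := by
    intro x hx
    rw [hclamp]
    simp only [max_eq_left hx.1.le, min_eq_left hx.2.le]
  set P : ℕ → ℝ → ℝ := fun n x => (msh n).pw (p n) (clamp x) with hP
  set Q : ℕ → ℝ → ℝ := fun n x => (msh n).pw (q n) (clamp x) with hQ
  have hPmono : ∀ n, Monotone (P n) := fun n a b hab =>
    ((msh n).pw_mono (hpmono n)) (hclampmem a) (hclampmem b) (hclampmono hab)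
  have hQmono : ∀ n, Monotone (Q n) := fun n a b hab =>
    ((msh n).pw_mono (hqmono n)) (hclampmem a) (hclampmem b) (hclampmono hab)
  have hpwrange : ∀ (m : Mesh) (v : ℕ → ℝ), Monotone v → ∀ z ∈ Set.Icc (0:ℝ) 1,
      v 0 ≤ m.pw v z ∧ m.pw v z ≤ v (m.I + 1) := by
    intro m v hv z hz
    have h0 : m.pw v 0 = v 0 := if_pos rfl
    have h1 : m.pw v 1 = v (m.I + 1) := by
      unfold Mesh.pw
      rw [if_neg one_ne_zero, if_pos rfl]
    constructor
    · rw [← h0]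
      exact m.pw_mono hv (Set.left_mem_Icc.mpr zero_le_one) hz hz.1
    · rw [← h1]
      exact m.pw_mono hv hz (Set.right_mem_Icc.mpr zero_le_one) hz.2
  have hPbd : ∀ n x, P n x ∈ Set.Icc (-M) M := by
    intro n x
    obtain ⟨hlo, hhi⟩ := hpwrange (msh n) (p n) (hpmono n) (clamp x) (hclampmem x)
    exact ⟨le_trans (by linarith [hp0 n 0]) hlo, le_trans hhi (hptop n)⟩
  have hQbd : ∀ n x, Q n x ∈ Set.Icc (-M) M := by
    intro n x
    obtain ⟨hlo, hhi⟩ := hpwrange (msh n) (q n) (hqmono n) (clamp x) (hclampmem x)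
    exact ⟨le_trans (by linarith [hq0 n 0]) hlo, le_trans hhi (hqtop n)⟩
  -- two successive Helly extractions
  obtain ⟨g1, φ1, hg1mono, hg1bd, hφ1, hconv1⟩ := helly_selection M P hPmono hPbd
  obtain ⟨g2, φ2, hg2mono, hg2bd, hφ2, hconv2⟩ :=
    helly_selection M (fun n => Q (φ1 n)) (fun n => hQmono (φ1 n)) (fun n => hQbd (φ1 n))
  set φ : ℕ → ℕ := fun n => φ1 (φ2 n) with hφdef
  have hφ : StrictMono φ := hφ1.comp hφ2
  set wlim : ℝ → ℝ := fun x => g1 x - g2 x with hwlim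
  -- pw w = P - Q on (0,1)
  have hdecomp : ∀ n, ∀ x ∈ Set.Ioo (0:ℝ) 1, (msh n).pw (w n) x = P n x - Q n x := by
    intro n x hx
    have hw : w n = fun i => p n i - q n i := funext fun i => (hpq n i).symm
    rw [hw]
    show (msh n).pw _ x = (msh n).pw (p n) (clamp x) - (msh n).pw (q n) (clamp x)
    rw [hclampid x hx]
    exact (msh n).pw_sub _ _ x
  have hwm : Measurable wlim := (hg1mono.measurable).sub (hg2mono.measurable)
  refine ⟨wlim, φ, hφ, ?_, ?_⟩
  · refine MemLp.of_bound hwm.aestronglyMeasurable (2 * M) ?_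
    refine ae_of_all _ fun x => ?_
    have h1 := hg1bd x
    have h2 := hg2bd x
    simp only [Set.mem_Icc] at h1 h2
    rw [Real.norm_eq_abs]
    show |g1 x - g2 x| ≤ 2 * M
    rw [abs_le]
    constructor <;> linarith [h1.1, h1.2, h2.1, h2.2]
  · -- dominated convergence
    have hmeas : ∀ n : ℕ, AEStronglyMeasurable
        (fun x => ((msh (φ n)).pw (w (φ n)) x - wlim x) ^ 2)
        (volume.restrict (Set.Ioo (0:ℝ) 1)) := by
      intro n
      have hGm : Measurable (fun x => (P (φ n) x - Q (φ n) x - wlim x) ^ 2) :=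
        ((((hPmono (φ n)).measurable.sub (hQmono (φ n)).measurable).sub hwm).pow_const 2)
      refine hGm.aestronglyMeasurable.congr ?_
      refine ((ae_restrict_iff' measurableSet_Ioo).mpr (ae_of_all _ fun x hx => ?_))
      show (P (φ n) x - Q (φ n) x - wlim x) ^ 2 = ((msh (φ n)).pw (w (φ n)) x - wlim x) ^ 2
      rw [hdecomp (φ n) x hx]
    have hbound : ∀ n : ℕ, ∀ᵐ x ∂(volume.restrict (Set.Ioo (0:ℝ) 1)),
        ‖((msh (φ n)).pw (w (φ n)) x - wlim x) ^ 2‖ ≤ (4 * M) ^ 2 := by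
      intro n
      refine ((ae_restrict_iff' measurableSet_Ioo).mpr (ae_of_all _ fun x hx => ?_))
      rw [hdecomp (φ n) x hx, Real.norm_eq_abs, abs_of_nonneg (sq_nonneg _)]
      have h1 := hPbd (φ n) x
      have h2 := hQbd (φ n) x
      have h3 := hg1bd x
      have h4 := hg2bd x
      simp only [Set.mem_Icc] at h1 h2 h3 h4
      have hwx : wlim x = g1 x - g2 x := rfl
      rw [hwx]
      exact sq_le_sq' (by linarith [h1.1, h1.2, h2.1, h2.2, h3.1, h3.2, h4.1, h4.2])
        (by linarith [h1.1, h1.2, h2.1, h2.2, h3.1, h3.2, h4.1, h4.2])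
    have hlim : ∀ᵐ x ∂(volume.restrict (Set.Ioo (0:ℝ) 1)),
        Tendsto (fun n => ((msh (φ n)).pw (w (φ n)) x - wlim x) ^ 2) atTop (𝓝 0) := by
      have hD : (volume.restrict (Set.Ioo (0:ℝ) 1))
          ({x | ¬ContinuousAt g1 x} ∪ {x | ¬ContinuousAt g2 x}) = 0 := by
        refine measure_mono_null (Set.Subset.refl _) ?_
        refine le_antisymm (le_trans (Measure.restrict_le_self _) (le_of_eq ?_)) zero_le
        exact ((hg1mono.countable_not_continuousAt).union
          (hg2mono.countable_not_continuousAt)).measure_zero _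
      filter_upwards [ae_restrict_mem measurableSet_Ioo,
        (MeasureTheory.measure_eq_zero_iff_ae_notMem.mp hD)] with x hx hxD
      have hx1 : ContinuousAt g1 x := by
        by_contra hcon
        exact hxD (Set.mem_union_left _ hcon)
      have hx2 : ContinuousAt g2 x := by
        by_contra hcon
        exact hxD (Set.mem_union_right _ hcon)
      have t1 : Tendsto (fun n => P (φ n) x) atTop (𝓝 (g1 x)) :=
        (hconv1 x hx1).comp hφ2.tendsto_atTop
      have t2 : Tendsto (fun n => Q (φ n) x) atTop (𝓝 (g2 x)) := hconv2 x hx2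
      have t3 : Tendsto (fun n => (P (φ n) x - Q (φ n) x - wlim x) ^ 2) atTop
          (𝓝 ((g1 x - g2 x - wlim x) ^ 2)) :=
        ((t1.sub t2).sub tendsto_const_nhds).pow 2
      have hz : (g1 x - g2 x - wlim x) ^ 2 = 0 := by
        have hwx : wlim x = g1 x - g2 x := rfl
        rw [hwx]; ring
      rw [hz] at t3
      refine t3.congr fun k => ?_
      rw [hdecomp (φ k) x hx]
    have := MeasureTheory.tendsto_integral_of_dominated_convergence
      (fun _ => (4 * M) ^ 2) hmeas (integrable_const _) hbound hlim
    simpa using this
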